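/- Let a ≥ 3, let A be the sequence with A_0 = 0, A_1 = 1, A_{n+2} = a·A_{n+1} − A_n + 1, and let n ≥ 2, 1 ≤ i ≤ A_{2n+1} − A_{2n}. Then (A_{2n+1} − i)/A_{2n} ≤ (A_{2n} − 1)/A_{2n−1}. -/
import Mathlib

lemma stmt4_aux_pos (a : ℤ) (ha : 3 ≤ a) (A : ℕ → ℤ)
    (hA0 : A 0 = 0) (hA1 : A 1 = 1)
    (hrec : ∀ n : ℕ, A (n + 2) = a * A (n + 1) - A n + 1) :
    ∀ n : ℕ, 0 ≤ A n ∧ A n + 1 ≤ A (n + 1) := by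
  intro n
  induction n with
  | zero => simp [hA0, hA1]
  | succ k ih =>
    obtain ⟨h0, h1⟩ := ih
    constructor
    · linarith
    · have := hrec k
      nlinarith

lemma stmt4_aux_id (a : ℤ) (ha : 3 ≤ a) (A : ℕ → ℤ)
    (hA0 : A 0 = 0) (hA1 : A 1 = 1)
    (hrec : ∀ n : ℕ, A (n + 2) = a * A (n + 1) - A n + 1) :
    ∀ n : ℕ, A (n + 2) * A n = A (n + 1) * (A (n + 1) - 1) := by
  intro n
  induction n with
  | zero => simp [hA0, hA1]
  | succ k ih =>
    have h1 := hrec k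
    have h2 : A (k + 3) = a * A (k + 2) - A (k + 1) + 1 := hrec (k + 1)
    show A (k + 3) * A (k + 1) = A (k + 2) * (A (k + 2) - 1)
    linear_combination A (k+1) * h2 + ih - A (k+2) * h1

/-- For `n ≥ 2` and `1 ≤ i ≤ A (2n+1) - A (2n)`:
`(A (2n+1) - i)/A (2n) ≤ (A (2n) - 1)/A (2n-1)` (as rationals). -/
theorem stmt4 (a : ℤ) (ha : 3 ≤ a) (A : ℕ → ℤ)
    (hA0 : A 0 = 0) (hA1 : A 1 = 1)
    (hrec : ∀ n : ℕ, A (n + 2) = a * A (n + 1) - A n + 1) :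
    ∀ (n : ℕ) (i : ℤ), 2 ≤ n → 1 ≤ i → i ≤ A (2 * n + 1) - A (2 * n) →
      ((A (2 * n + 1) : ℚ) - (i : ℚ)) / (A (2 * n) : ℚ)
        ≤ ((A (2 * n) : ℚ) - 1) / (A (2 * n - 1) : ℚ) := by
  intro n i hn hi1 hi2
  obtain ⟨k, rfl⟩ : ∃ k, n = k + 2 := ⟨n - 2, by omega⟩
  have e1 : 2 * (k + 2) + 1 = 2 * k + 5 := by ring
  have e2 : 2 * (k + 2) = 2 * k + 4 := by ring
  have e3 : 2 * (k + 2) - 1 = 2 * k + 3 := by omega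
  rw [e1, e2, e3] at *
  have pos := stmt4_aux_pos a ha A hA0 hA1 hrec
  have id1 := stmt4_aux_id a ha A hA0 hA1 hrec (2 * k + 3)
  have p3 : 1 ≤ A (2 * k + 3) := by
    have h0 := (pos 0).1
    have := (pos 0).2
    have h1 := (pos 1).2
    have h2 := (pos 2).2
    have h3 : ∀ m, A m + 1 ≤ A (m + 1) := fun m => (pos m).2
    have : (0 : ℤ) ≤ A (2 * k) := (pos (2 * k)).1
    have := h3 (2 * k); have := h3 (2 * k + 1); have := h3 (2 * k + 2)
    linarith
  have p4 : 1 ≤ A (2 * k + 4) := by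
    have := (pos (2 * k + 3)).2; linarith
  have hp3 : (0 : ℚ) < (A (2 * k + 3) : ℚ) := by exact_mod_cast by linarith
  have hp4 : (0 : ℚ) < (A (2 * k + 4) : ℚ) := by exact_mod_cast by linarith
  rw [div_le_div_iff₀ hp4 hp3]
  have key : (A (2 * k + 5) - i) * A (2 * k + 3) ≤ (A (2 * k + 4) - 1) * A (2 * k + 4) := by
    nlinarith [id1]
  exact_mod_cast key
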